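/- With notation as in the pencil decomposition and c_1, ..., c_{n+1} nonzero, if the conditions (S) hold -- namely w Q^{-1} (B Q^{-1})^k v = 0 for all k ≥ 1 and w Q^{-1} v = c_{n+1} -- and additionally B Q^{-1} v ≠ 0, then setting A = -B Q^{-1} and letting d be minimal with Av, ..., A^{d+1}v linearly dependent, there exists a nonzero polynomial vector f(x) of degree d with (M_0 + x M_1) f(x) = 0; in particular det(M_0 + x M_1) = 0 in C[x]. -/

import Mathlib

open Matrix

noncomputable def M0 (c : ℕ → ℂ) (n : ℕ) : Matrix (Fin n) (Fin n) ℂ :=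
  fun i j => if (j : ℕ) ≤ (i : ℕ) + 1 then c ((i : ℕ) + 2 - (j : ℕ)) else 0

noncomputable def pm (c : ℕ → ℂ) (r : ℕ) : ℂ := (M0 c r).det

noncomputable def Qmat (c : ℕ → ℂ) (s : ℕ) : Matrix (Fin s) (Fin s) ℂ :=
  fun i j => if (j : ℕ) ≤ (i : ℕ) then c ((i : ℕ) + 1 - (j : ℕ)) else 0
/-- The matrix `M1` with ones exactly on the second superdiagonal. -/
noncomputable def M1mat (n : ℕ) : Matrix (Fin n) (Fin n) ℂ :=
  fun i j => if (j : ℕ) = (i : ℕ) + 2 then 1 else 0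

/-- The upper shift matrix `B`. -/
noncomputable def Bmat (s : ℕ) : Matrix (Fin s) (Fin s) ℂ :=
  fun i j => if (j : ℕ) = (i : ℕ) + 1 then 1 else 0

section Helpers

lemma coeff_of_sum (d N : ℕ) (e : ℕ → ℂ) (hN : N ≤ d) :
    (∑ k ∈ Finset.range (d+1), Polynomial.C (e k) * Polynomial.X ^ k).coeff N = e N := by
  rw [Polynomial.finset_sum_coeff]
  simp only [Polynomial.coeff_C_mul, Polynomial.coeff_X_pow]
  rw [Finset.sum_eq_single N]
  · simp
  · intro b _ hb; simp [Ne.symm hb]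
  · intro h; exact absurd (Finset.mem_range.mpr (by omega)) h

lemma degree_sum_le_d (d : ℕ) (e : ℕ → ℂ) :
    (∑ k ∈ Finset.range (d+1), Polynomial.C (e k) * Polynomial.X ^ k).degree
      ≤ ((d : ℕ) : WithBot ℕ) := by
  refine (Polynomial.degree_sum_le _ _).trans ?_
  refine Finset.sup_le fun k hk => ?_
  refine (Polynomial.degree_C_mul_X_pow_le k (e k)).trans ?_
  exact_mod_cast Nat.cast_le.mpr (Nat.lt_succ_iff.mp (Finset.mem_range.mp hk))

lemma poly_sum_zero (d : ℕ) (P R : ℕ → ℂ) (h0 : P 0 = 0) (htop : P (d+1) = 0)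
    (h : ∀ k, P (k+1) + R k = 0) :
    (∑ k ∈ Finset.range (d+1), Polynomial.C (P k) * Polynomial.X ^ k) +
      ∑ k ∈ Finset.range (d+1), Polynomial.C (R k) * Polynomial.X ^ (k+1) = 0 := by
  have hR : (∑ k ∈ Finset.range (d+1), Polynomial.C (R k) * Polynomial.X ^ (k+1))
      = ∑ k ∈ Finset.range (d+2),
          Polynomial.C (Nat.rec 0 (fun k _ => R k) k : ℂ) * Polynomial.X ^ k := by
    rw [Finset.sum_range_succ'
      (fun k => Polynomial.C (Nat.rec 0 (fun k _ => R k) k : ℂ) * Polynomial.X ^ k) (d+1)]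
    simp
  have hP : (∑ k ∈ Finset.range (d+1), Polynomial.C (P k) * Polynomial.X ^ k)
      = ∑ k ∈ Finset.range (d+2), Polynomial.C (P k) * Polynomial.X ^ k := by
    rw [Finset.sum_range_succ (fun k => Polynomial.C (P k) * Polynomial.X ^ k) (d+1), htop]
    simp
  rw [hR, hP, ← Finset.sum_add_distrib]
  refine Finset.sum_eq_zero fun k _ => ?_
  cases k with
  | zero => simp [h0]
  | succ k =>
    rw [← add_mul, ← Polynomial.C_add]
    show Polynomial.C (P (k+1) + R k) * _ = 0
    rw [h k]
    simp

lemma row_expand {n : ℕ} (d : ℕ) (M0' M1' : Matrix (Fin n) (Fin n) ℂ) (E : ℕ → Fin n → ℂ)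
    (i : Fin n) :
    ∑ j, (Polynomial.C (M0' i j) + Polynomial.X * Polynomial.C (M1' i j)) *
        (∑ k ∈ Finset.range (d+1), Polynomial.C (E k j) * Polynomial.X ^ k)
    = (∑ k ∈ Finset.range (d+1), Polynomial.C ((M0' *ᵥ E k) i) * Polynomial.X ^ k) +
      ∑ k ∈ Finset.range (d+1), Polynomial.C ((M1' *ᵥ E k) i) * Polynomial.X ^ (k+1) := by
  simp only [Matrix.mulVec, dotProduct, map_sum, Finset.sum_mul, Finset.mul_sum,
    Polynomial.C_mul]
  rw [Finset.sum_comm]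
  rw [← Finset.sum_add_distrib]
  refine Finset.sum_congr rfl fun j _ => ?_
  rw [← Finset.sum_add_distrib]
  refine Finset.sum_congr rfl fun k _ => ?_
  ring

lemma dotProduct_finsum {m : ℕ} (w : Fin m → ℂ) (s : Finset ℕ) (u : ℕ → Fin m → ℂ) :
    w ⬝ᵥ (∑ j ∈ s, u j) = ∑ j ∈ s, w ⬝ᵥ u j := by
  simp only [dotProduct, Finset.sum_apply, Finset.mul_sum]
  exact Finset.sum_comm

lemma mulVec_sum_smul {m : ℕ} (M : Matrix (Fin m) (Fin m) ℂ) (s : Finset ℕ) (t : ℕ → ℂ)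
    (u : ℕ → Fin m → ℂ) : M *ᵥ (∑ j ∈ s, t j • u j) = ∑ j ∈ s, t j • (M *ᵥ u j) := by
  simp only [← Matrix.mulVecLin_apply, map_sum, LinearMap.map_smul]

-- block row computations
lemma M0_mulVec_castSucc (c : ℕ → ℂ) (m : ℕ) (x : ℂ) (y : Fin m → ℂ) (i : Fin m) :
    (M0 c (m+1) *ᵥ Fin.cons x y) i.castSucc
      = c ((i:ℕ)+2) * x + (Qmat c m *ᵥ y) i := by
  simp only [Matrix.mulVec, dotProduct, Fin.sum_univ_succ, Fin.cons_zero, Fin.cons_succ,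
    M0, Qmat, Fin.coe_castSucc, Fin.val_succ, Fin.val_zero]
  congr 1
  refine Finset.sum_congr rfl fun j _ => ?_
  by_cases h : (j:ℕ) ≤ (i:ℕ)
  · rw [if_pos (show (j:ℕ)+1 ≤ (i:ℕ)+1 by omega), if_pos h,
      show (i:ℕ)+2-((j:ℕ)+1) = (i:ℕ)+1-(j:ℕ) by omega]
  · rw [if_neg (show ¬((j:ℕ)+1 ≤ (i:ℕ)+1) by omega), if_neg h]
lemma M0_mulVec_last (c : ℕ → ℂ) (m : ℕ) (x : ℂ) (y : Fin m → ℂ) :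
    (M0 c (m+1) *ᵥ Fin.cons x y) (Fin.last m)
      = c (m+2) * x + (fun i : Fin m => c (m+1-(i:ℕ))) ⬝ᵥ y := by
  simp only [Matrix.mulVec, dotProduct, Fin.sum_univ_succ, Fin.cons_zero, Fin.cons_succ,
    M0, Fin.val_last, Fin.val_succ, Fin.val_zero]
  congr 1
  refine Finset.sum_congr rfl fun j _ => ?_
  rw [if_pos (show (j:ℕ)+1 ≤ m+1 by omega), show m+2-((j:ℕ)+1) = m+1-(j:ℕ) by omega]
lemma M1_mulVec_castSucc (m : ℕ) (x : ℂ) (y : Fin m → ℂ) (i : Fin m) :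
    (M1mat (m+1) *ᵥ Fin.cons x y) i.castSucc = (Bmat m *ᵥ y) i := by
  simp only [Matrix.mulVec, dotProduct, Fin.sum_univ_succ, Fin.cons_zero, Fin.cons_succ,
    M1mat, Bmat, Fin.coe_castSucc, Fin.val_succ, Fin.val_zero]
  simp only [show ¬ (0 = (i:ℕ)+2) by omega, if_false, zero_mul, zero_add]
  refine Finset.sum_congr rfl fun j _ => ?_
  by_cases h : (j:ℕ) = (i:ℕ) + 1
  · rw [if_pos (by omega), if_pos h]
  · rw [if_neg (by omega), if_neg h]
lemma M1_mulVec_last (m : ℕ) (x : ℂ) (y : Fin m → ℂ) :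
    (M1mat (m+1) *ᵥ Fin.cons x y) (Fin.last m) = 0 := by
  simp only [Matrix.mulVec, dotProduct, Fin.sum_univ_succ, Fin.cons_zero, Fin.cons_succ,
    M1mat, Fin.val_last, Fin.val_succ, Fin.val_zero]
  simp only [show ¬ (0 = m+2) by omega, if_false, zero_mul, zero_add]
  refine Finset.sum_eq_zero fun j _ => ?_
  rw [if_neg (by omega), zero_mul]
end Helpers

theorem stmt16 (n : ℕ) (hn : 3 ≤ n) (c : ℕ → ℂ)
    (hc : ∀ k, 1 ≤ k → k ≤ n + 1 → c k ≠ 0)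
    (hS1 : ∀ k, 1 ≤ k →
      (fun i : Fin (n - 1) => c (n - (i : ℕ))) ⬝ᵥ
        (((Qmat c (n - 1))⁻¹ * (Bmat (n - 1) * (Qmat c (n - 1))⁻¹) ^ k) *ᵥ
          fun i : Fin (n - 1) => c ((i : ℕ) + 2)) = 0)
    (hS2 : (fun i : Fin (n - 1) => c (n - (i : ℕ))) ⬝ᵥ
        ((Qmat c (n - 1))⁻¹ *ᵥ fun i : Fin (n - 1) => c ((i : ℕ) + 2)) = c (n + 1))
    (hBv : (Bmat (n - 1) * (Qmat c (n - 1))⁻¹) *ᵥ (fun i : Fin (n - 1) => c ((i : ℕ) + 2))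
            ≠ 0)
    (d : ℕ)
    (hld : ¬ LinearIndependent ℂ fun i : Fin (d + 1) =>
      ((-(Bmat (n - 1) * (Qmat c (n - 1))⁻¹)) ^ ((i : ℕ) + 1)) *ᵥ
        fun i : Fin (n - 1) => c ((i : ℕ) + 2))
    (hmin : ∀ e < d, LinearIndependent ℂ fun i : Fin (e + 1) =>
      ((-(Bmat (n - 1) * (Qmat c (n - 1))⁻¹)) ^ ((i : ℕ) + 1)) *ᵥ
        fun i : Fin (n - 1) => c ((i : ℕ) + 2)) :
    (∃ f : Fin n → Polynomial ℂ, f ≠ 0 ∧ (∀ i, (f i).degree ≤ (d : ℕ)) ∧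
      (∃ i, (f i).degree = (d : ℕ)) ∧
      ∀ i, ∑ j, (Polynomial.C (M0 c n i j) + Polynomial.X * Polynomial.C (M1mat n i j))
        * f j = 0) ∧
    Matrix.det (fun i j : Fin n =>
      Polynomial.C (M0 c n i j) + Polynomial.X * Polynomial.C (M1mat n i j)) = 0 := by
  obtain ⟨m, rfl⟩ : ∃ m, n = m + 1 := ⟨n - 1, by omega⟩
  replace hS1 : ∀ k, 1 ≤ k →
      (fun i : Fin m => c (m + 1 - (i : ℕ))) ⬝ᵥ
        (((Qmat c m)⁻¹ * (Bmat m * (Qmat c m)⁻¹) ^ k) *ᵥ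
          fun i : Fin m => c ((i : ℕ) + 2)) = 0 := hS1
  replace hS2 : (fun i : Fin m => c (m + 1 - (i : ℕ))) ⬝ᵥ
      ((Qmat c m)⁻¹ *ᵥ fun i : Fin m => c ((i : ℕ) + 2)) = c (m + 2) := hS2
  replace hBv : (Bmat m * (Qmat c m)⁻¹) *ᵥ (fun i : Fin m => c ((i : ℕ) + 2)) ≠ 0 := hBv
  replace hld : ¬ LinearIndependent ℂ fun i : Fin (d + 1) =>
      ((-(Bmat m * (Qmat c m)⁻¹)) ^ ((i : ℕ) + 1)) *ᵥ
        fun i : Fin m => c ((i : ℕ) + 2) := hld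
  replace hmin : ∀ e < d, LinearIndependent ℂ fun i : Fin (e + 1) =>
      ((-(Bmat m * (Qmat c m)⁻¹)) ^ ((i : ℕ) + 1)) *ᵥ
        fun i : Fin m => c ((i : ℕ) + 2) := hmin
  set Q : Matrix (Fin m) (Fin m) ℂ := Qmat c m with hQdef
  set B : Matrix (Fin m) (Fin m) ℂ := Bmat m with hBdef
  set v : Fin m → ℂ := fun i => c ((i:ℕ)+2) with hvdef
  set w : Fin m → ℂ := fun i => c (m + 1 - (i:ℕ)) with hwdef
  set A : Matrix (Fin m) (Fin m) ℂ := -(B * Q⁻¹) with hAdef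
  -- Q is invertible
  have hc1 : c 1 ≠ 0 := hc 1 le_rfl (by omega)
  have hQdet : IsUnit Q.det := by
    have : Q.det = c 1 ^ m := by
      rw [Matrix.det_of_lowerTriangular Q (fun i j hij => ?_)]
      · rw [show (fun i : Fin m => Q i i) = fun _ => c 1 from funext fun i => ?_]
        · simp
        · simp [hQdef, Qmat]
      · have : (i:ℕ) < (j:ℕ) := hij
        simp only [hQdef, Qmat]
        rw [if_neg (by omega)]
    rw [this]
    exact (pow_ne_zero m hc1).isUnit
  have hQQi : Q * Q⁻¹ = 1 := Matrix.mul_nonsing_inv Q hQdet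
  -- linear dependence data
  obtain ⟨b, hb0, i0, hi0⟩ := Fintype.not_linearIndependent_iff.mp hld
  have hAv : A *ᵥ v ≠ 0 := by
    rw [hAdef, Matrix.neg_mulVec, neg_ne_zero]
    exact hBv
  have hd1 : 1 ≤ d := by
    by_contra h
    have hd0 : d = 0 := by omega
    subst hd0
    rw [Fin.sum_univ_one] at hb0
    have : b 0 ≠ 0 := by
      have h0 : i0 = 0 := by
        apply Fin.ext
        have := i0.isLt
        simp only [Fin.val_zero]
        omega
      rwa [h0] at hi0
    apply hAv
    have := (smul_eq_zero.mp hb0).resolve_left this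
    simpa using this
  have hblast : b (Fin.last d) ≠ 0 := by
    intro hz
    obtain ⟨e, rfl⟩ : ∃ e, d = e + 1 := ⟨d - 1, by omega⟩
    rw [Fin.sum_univ_castSucc, hz, zero_smul, add_zero] at hb0
    have hli := Fintype.linearIndependent_iff.mp (hmin e (by omega))
      (fun i => b i.castSucc) (by simpa using hb0)
    apply hi0
    induction i0 using Fin.lastCases with
    | last => exact hz
    | cast i => exact hli i
  -- coefficients
  set a : ℕ → ℂ := fun k => if h : k ≤ d then b ⟨d - k, by omega⟩ else 0 with hadef
  set g : ℕ → Fin m → ℂ :=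
    fun k => -(Q⁻¹ *ᵥ (∑ j ∈ Finset.range (k+1), a (k-j) • ((A ^ j) *ᵥ v))) with hgdef
  have hQg : ∀ k, Q *ᵥ g k = -(∑ j ∈ Finset.range (k+1), a (k-j) • ((A ^ j) *ᵥ v)) := by
    intro k
    simp only [hgdef]
    rw [Matrix.mulVec_neg, Matrix.mulVec_mulVec, hQQi, Matrix.one_mulVec]
  have hBg : ∀ k, B *ᵥ g k = ∑ j ∈ Finset.range (k+1), a (k-j) • ((A ^ (j+1)) *ᵥ v) := by
    intro k
    simp only [hgdef]
    rw [Matrix.mulVec_neg, Matrix.mulVec_mulVec, ← Matrix.neg_mulVec, ← hAdef]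
    rw [mulVec_sum_smul]
    refine Finset.sum_congr rfl fun j _ => ?_
    rw [Matrix.mulVec_mulVec, ← pow_succ']
  have cond0 : a 0 • v + Q *ᵥ g 0 = 0 := by
    rw [hQg 0]
    simp
  have cond1 : ∀ k, a (k+1) • v + Q *ᵥ g (k+1) + B *ᵥ g k = 0 := by
    intro k
    rw [hQg (k+1), hBg k]
    rw [Finset.sum_range_succ' (fun j => a (k+1-j) • ((A ^ j) *ᵥ v)) (k+1)]
    have h1 : ∀ j, a (k+1-(j+1)) • ((A ^ (j+1)) *ᵥ v) = a (k-j) • ((A ^ (j+1)) *ᵥ v) := by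
      intro j; rw [show k+1-(j+1) = k-j by omega]
    simp only [h1, Nat.sub_zero, pow_zero, Matrix.one_mulVec]
    abel
  have condtop : B *ᵥ g d = 0 := by
    rw [hBg d]
    rw [← hb0, Finset.sum_range]
    refine Finset.sum_congr rfl fun j _ => ?_
    have hj := j.isLt
    congr 1
    simp only [hadef]
    rw [dif_pos (by omega : d - (j:ℕ) ≤ d)]
    congr 1
    exact Fin.ext (by simp only [Fin.val_mk]; omega)
  -- last-row identities
  have hkey : ∀ j : ℕ, w ⬝ᵥ (Q⁻¹ *ᵥ ((A ^ j) *ᵥ v)) = if j = 0 then c (m+2) else 0 := by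
    intro j
    have hApow : ∀ j : ℕ, A ^ j = ((-1 : ℂ) ^ j) • (B * Q⁻¹) ^ j := by
      intro j
      induction j with
      | zero => simp
      | succ j ih =>
        rw [pow_succ, ih, hAdef, smul_mul_assoc, mul_neg, smul_neg,
          pow_succ ((-1 : ℂ)), pow_succ (B * Q⁻¹), mul_neg_one, neg_smul]
    cases j with
    | zero =>
      rw [if_pos rfl, pow_zero, Matrix.one_mulVec]
      exact hS2
    | succ j =>
      rw [if_neg (by omega), hApow]
      rw [Matrix.smul_mulVec, Matrix.mulVec_smul, dotProduct_smul]
      rw [Matrix.mulVec_mulVec]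
      rw [hS1 (j+1) (by omega)]
      simp
  have condlast : ∀ k, c (m+2) * a k + w ⬝ᵥ g k = 0 := by
    intro k
    have : w ⬝ᵥ g k = -(a k * c (m+2)) := by
      simp only [hgdef]
      rw [dotProduct_neg]
      congr 1
      rw [mulVec_sum_smul, dotProduct_finsum]
      rw [Finset.sum_range_succ' (fun j => w ⬝ᵥ (a (k-j) • (Q⁻¹ *ᵥ ((A ^ j) *ᵥ v)))) k]
      have hz : ∀ j ∈ Finset.range k,
          w ⬝ᵥ (a (k-(j+1)) • (Q⁻¹ *ᵥ ((A ^ (j+1)) *ᵥ v))) = 0 := by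
        intro j _
        rw [dotProduct_smul, hkey (j+1)]
        simp
      rw [Finset.sum_congr rfl hz, Finset.sum_const_zero, zero_add]
      rw [dotProduct_smul, Nat.sub_zero, hkey 0]
      simp [smul_eq_mul]
    rw [this]; ring
  -- assemble the polynomial vector
  set F : ℕ → Fin (m+1) → ℂ := fun k => Fin.cons (a k) (g k) with hFdef
  set E : ℕ → Fin (m+1) → ℂ := fun k => if k ≤ d then F k else 0 with hEdef
  set f : Fin (m+1) → Polynomial ℂ :=
    fun i => ∑ k ∈ Finset.range (d+1), Polynomial.C (E k i) * Polynomial.X ^ k with hfdef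
  have hEF : ∀ k ≤ d, E k = F k := fun k hk => by rw [hEdef]; simp [hk]
  have hE0 : ∀ k, d < k → E k = 0 := fun k hk => by rw [hEdef]; simp [Nat.not_le.mpr hk]
  have hak : ∀ k, d < k → a k = 0 := fun k hk => by rw [hadef]; simp [Nat.not_le.mpr hk]
  -- step equations
  have hP0 : M0 c (m+1) *ᵥ E 0 = 0 := by
    rw [hEF 0 (by omega), hFdef]
    funext i
    induction i using Fin.lastCases with
    | last =>
      rw [M0_mulVec_last]
      have := condlast 0
      simp only [Pi.zero_apply, ← hwdef]
      linear_combination this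
    | cast i =>
      rw [M0_mulVec_castSucc]
      have := congrFun cond0 i
      simp only [Pi.add_apply, Pi.smul_apply, smul_eq_mul, Pi.zero_apply, hvdef] at this
      simp only [← hQdef, Pi.zero_apply]
      linear_combination this
  have hstep : ∀ k, M0 c (m+1) *ᵥ E (k+1) + M1mat (m+1) *ᵥ E k = 0 := by
    intro k
    rcases lt_trichotomy k d with hk | hk | hk
    · -- k + 1 ≤ d
      rw [hEF (k+1) (by omega), hEF k (by omega), hFdef]
      funext i
      induction i using Fin.lastCases with
      | last =>
        show _ + _ = (0 : Fin (m+1) → ℂ) _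
        rw [M0_mulVec_last, M1_mulVec_last]
        have := condlast (k+1)
        simp only [Pi.zero_apply, ← hwdef]
        linear_combination this
      | cast i =>
        show _ + _ = (0 : Fin (m+1) → ℂ) _
        rw [M0_mulVec_castSucc, M1_mulVec_castSucc]
        have := congrFun (cond1 k) i
        simp only [Pi.add_apply, Pi.smul_apply, smul_eq_mul, Pi.zero_apply, hvdef] at this
        simp only [← hQdef, ← hBdef, Pi.zero_apply]
        linear_combination this
    · -- k = d
      subst hk
      rw [hE0 (k+1) (by omega), Matrix.mulVec_zero, zero_add, hEF k le_rfl, hFdef]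
      funext i
      induction i using Fin.lastCases with
      | last => rw [M1_mulVec_last]; rfl
      | cast i =>
        rw [M1_mulVec_castSucc]
        have := congrFun condtop i
        simpa using this
    · rw [hE0 (k+1) (by omega), hE0 k (by omega), Matrix.mulVec_zero, Matrix.mulVec_zero,
        add_zero]
  have hPtop : M0 c (m+1) *ᵥ E (d+1) = 0 := by
    rw [hE0 (d+1) (by omega), Matrix.mulVec_zero]
  -- the main polynomial equation
  have hrows : ∀ i, ∑ j, (Polynomial.C (M0 c (m+1) i j)
      + Polynomial.X * Polynomial.C (M1mat (m+1) i j)) * f j = 0 := by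
    intro i
    rw [hfdef]
    rw [row_expand d (M0 c (m+1)) (M1mat (m+1)) E i]
    exact poly_sum_zero d _ _ (congrFun hP0 i) (congrFun hPtop i)
      (fun k => congrFun (hstep k) i)
  -- a 0 ≠ 0
  have ha0 : a 0 ≠ 0 := by
    simp only [hadef]
    rw [dif_pos (by omega : 0 ≤ d)]
    convert hblast using 2
    exact Fin.ext (by simp)
  have hcoeff : ∀ (i : Fin (m+1)) (N : ℕ), N ≤ d → (f i).coeff N = E N i := by
    intro i N hN
    rw [hfdef]
    exact coeff_of_sum d N (fun k => E k i) hN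
  have hfne : f ≠ 0 := by
    intro h
    have h0 : f 0 = 0 := congrFun h 0
    have := hcoeff 0 0 (by omega)
    rw [h0, Polynomial.coeff_zero] at this
    apply ha0
    rw [hEF 0 (by omega), hFdef] at this
    simpa using this.symm
  have hdegle : ∀ i, (f i).degree ≤ ((d : ℕ) : WithBot ℕ) := by
    intro i
    rw [hfdef]
    exact degree_sum_le_d d _
  -- existence of a degree-d entry
  have hdegd : ∃ i, (f i).degree = ((d : ℕ) : WithBot ℕ) := by
    by_cases hgd : g d = 0
    · -- then b 0 ≠ 0, so a d ≠ 0 and f 0 has degree d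
      have hbz : b ⟨0, by omega⟩ ≠ 0 := by
        intro hbz
        have hQgd : Q *ᵥ g d = 0 := by rw [hgd, Matrix.mulVec_zero]
        rw [hQg d, neg_eq_zero] at hQgd
        have hsum : ∑ j ∈ Finset.range (d+1), a (d-j) • ((A ^ j) *ᵥ v) = 0 := hQgd
        rw [Finset.sum_range_succ' (fun j => a (d-j) • ((A ^ j) *ᵥ v)) d] at hsum
        have h00 : a (d - 0) • ((A ^ 0) *ᵥ v) = 0 := by
          rw [Nat.sub_zero]
          simp only [hadef]
          rw [dif_pos le_rfl]
          rw [show (⟨d - d, by omega⟩ : Fin (d+1)) = ⟨0, by omega⟩ from Fin.ext (by simp), hbz]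
          simp
        rw [h00, add_zero] at hsum
        obtain ⟨e, rfl⟩ : ∃ e, d = e + 1 := ⟨d - 1, by omega⟩
        rw [Finset.sum_range] at hsum
        have hli := Fintype.linearIndependent_iff.mp (hmin e (by omega))
          (fun i => b i.succ) ?_
        · apply hi0
          induction i0 using Fin.cases with
          | zero => rw [show (0 : Fin (e+1+1)) = ⟨0, by omega⟩ from rfl]; exact hbz
          | succ i => exact hli i
        · rw [← hsum]
          refine Finset.sum_congr rfl fun i _ => ?_
          congr 1
          · rw [hadef]
            simp only []
            rw [dif_pos (by omega : e + 1 - ((i:ℕ)+1) ≤ e + 1)]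
            congr 1
            exact Fin.ext (by simp; omega)
      refine ⟨0, ?_⟩
      refine le_antisymm (hdegle 0) (Polynomial.le_degree_of_ne_zero ?_)
      rw [hcoeff 0 d le_rfl, hEF d le_rfl, hFdef]
      simp only [Fin.cons_zero]
      simp only [hadef]
      rw [dif_pos le_rfl]
      rw [show (⟨d - d, by omega⟩ : Fin (d+1)) = ⟨0, by omega⟩ from Fin.ext (by simp)]
      exact hbz
    · obtain ⟨j, hj⟩ := Function.ne_iff.mp hgd
      refine ⟨j.succ, ?_⟩
      refine le_antisymm (hdegle j.succ) (Polynomial.le_degree_of_ne_zero ?_)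
      rw [hcoeff j.succ d le_rfl, hEF d le_rfl, hFdef]
      simpa using hj
  -- determinant
  have hmul : (fun i j : Fin (m+1) => Polynomial.C (M0 c (m+1) i j)
      + Polynomial.X * Polynomial.C (M1mat (m+1) i j)) *ᵥ f = 0 := by
    funext i
    exact hrows i
  refine ⟨⟨f, hfne, hdegle, hdegd, hrows⟩, ?_⟩
  exact Matrix.exists_mulVec_eq_zero_iff.mp ⟨f, hfne, hmul⟩
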